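/- arXiv:1401.1467 — 3 statements merged into one kernel-verified Lean document; each statement's English description precedes it below -/
import Mathlib

section
/- Non-effective content of Proposition 1. For every discrete semimeasure m there exists a measure on the binary tree, i.e. a function a : List Bool → ℝ≥0∞ with a [] = 1 and a(x0) + a(x1) = a x for every string x, such that for every infinite binary sequence ω : ℕ → Bool one has ∑' n : ℕ, m(ω↾n) / a(ω↾n) ≤ 1. -/
open scoped ENNReal NNReal

/-- The first `n` bits of an infinite binary sequence `ω`. -/
def prefixSeq (ω : ℕ → Bool) (n : ℕ) : List Bool := (List.range n).map ω

/-- A discrete semimeasure on binary strings. -/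
def DiscreteSemimeasure (m : List Bool → ℝ≥0∞) : Prop := ∑' x : List Bool, m x ≤ 1

namespace Prop1

variable (m : List Bool → ℝ≥0∞)

/-- tail sum of `m` over extensions of `x` -/
noncomputable def S (x : List Bool) : ℝ≥0∞ := ∑' z : List Bool, m (x ++ z)

lemma m_le_S (x : List Bool) : m x ≤ S m x := by
  have := ENNReal.le_tsum (f := fun z : List Bool => m (x ++ z)) []
  simpa [S] using this

lemma S_rec (x : List Bool) :
    S m x = m x + (S m (x ++ [false]) + S m (x ++ [true])) := by
  classical
  set f : List Bool → ℝ≥0∞ := fun z => if z = [] then 0 else m (x ++ z) with hf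
  have h1 : S m x = m (x ++ []) + ∑' z : List Bool, f z := by
    rw [S, ENNReal.tsum_eq_add_tsum_ite (f := fun z => m (x ++ z)) []]
    congr 1
    apply tsum_congr; intro z
    by_cases h : z = [] <;> simp [hf, h]
  have hinj : Function.Injective (fun p : Bool × List Bool => p.1 :: p.2) := by
    intro p q h
    simp only [List.cons.injEq] at h
    exact Prod.ext h.1 h.2
  have h2 : (∑' p : Bool × List Bool, f (p.1 :: p.2)) = ∑' z : List Bool, f z := by
    apply hinj.tsum_eq
    intro z hz
    simp only [Function.mem_support, ne_eq] at hz
    rcases z with _ | ⟨b, l⟩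
    · simp [hf] at hz
    · exact ⟨(b, l), rfl⟩
  have h3 : (∑' p : Bool × List Bool, f (p.1 :: p.2)) =
      S m (x ++ [false]) + S m (x ++ [true]) := by
    rw [ENNReal.tsum_prod' (f := fun p : Bool × List Bool => f (p.1 :: p.2)), tsum_bool]
    simp only [hf, reduceIte, S]
    congr 1 <;> · apply tsum_congr; intro l; simp
  rw [h1, ← h2, h3]
  simp

lemma S_child_le (x : List Bool) (b : Bool) : S m (x ++ [b]) ≤ S m x := by
  rw [S_rec m x]
  cases b
  · exact le_trans le_self_add le_add_self
  · exact le_trans le_add_self le_add_self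

noncomputable def child (x : List Bool) (v : ℝ≥0∞) (b : Bool) : ℝ≥0∞ :=
  if S m (x ++ [false]) + S m (x ++ [true]) = 0 then (if b then 0 else v)
  else v * S m (x ++ [b]) / (S m (x ++ [false]) + S m (x ++ [true]))

noncomputable def g : List Bool → List Bool → ℝ≥0∞ → ℝ≥0∞
  | _, [], v => v
  | pre, b :: rest, v => g (pre ++ [b]) rest (child m pre v b)

noncomputable def a (x : List Bool) : ℝ≥0∞ := g m [] x 1

lemma g_append (l : List Bool) : ∀ (pre : List Bool) (v : ℝ≥0∞) (b : Bool),
    g m pre (l ++ [b]) v = child m (pre ++ l) (g m pre l v) b := by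
  induction l with
  | nil => intro pre v b; simp [g]
  | cons c t ih =>
      intro pre v b
      show g m (pre ++ [c]) (t ++ [b]) (child m pre v c) = _
      rw [ih]
      simp [g, List.append_assoc]

lemma a_nil : a m [] = 1 := rfl

lemma a_append (x : List Bool) (b : Bool) :
    a m (x ++ [b]) = child m x (a m x) b := by
  simpa [a] using g_append m x [] 1 b


lemma S_le_one (hm : DiscreteSemimeasure m) (x : List Bool) : S m x ≤ 1 := by
  refine le_trans ?_ hm
  exact ENNReal.tsum_comp_le_tsum_of_injective
    (fun z₁ z₂ h => List.append_cancel_left h) m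

lemma S_ne_top (hm : DiscreteSemimeasure m) (x : List Bool) : S m x ≠ ∞ :=
  ((S_le_one m hm x).trans_lt ENNReal.one_lt_top).ne

lemma child_le (hm : DiscreteSemimeasure m) (x : List Bool) (v : ℝ≥0∞) (b : Bool) :
    child m x v b ≤ v := by
  rw [child]
  split
  · split <;> simp
  · rename_i hd
    have hdt : S m (x ++ [false]) + S m (x ++ [true]) ≠ ∞ :=
      ENNReal.add_ne_top.mpr ⟨S_ne_top m hm _, S_ne_top m hm _⟩
    have h1 : v * S m (x ++ [b]) ≤ v * (S m (x ++ [false]) + S m (x ++ [true])) := by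
      apply mul_le_mul_right
      cases b
      · exact le_self_add
      · exact le_add_self
    calc v * S m (x ++ [b]) / (S m (x ++ [false]) + S m (x ++ [true]))
        ≤ v * (S m (x ++ [false]) + S m (x ++ [true])) /
          (S m (x ++ [false]) + S m (x ++ [true])) := ENNReal.div_le_div_right h1 _
      _ = v := by
          rw [mul_div_assoc, ENNReal.div_self hd hdt, mul_one]

lemma a_le_one (hm : DiscreteSemimeasure m) (x : List Bool) : a m x ≤ 1 := by
  induction x using List.reverseRecOn with
  | nil => simp [a_nil]
  | append_singleton y b ih =>
      rw [a_append]
      exact le_trans (child_le m hm y _ b) ih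

lemma a_ne_top (hm : DiscreteSemimeasure m) (x : List Bool) : a m x ≠ ∞ :=
  ((a_le_one m hm x).trans_lt ENNReal.one_lt_top).ne

lemma a_ne_zero (hm : DiscreteSemimeasure m) (x : List Bool) (hS : S m x ≠ 0) :
    a m x ≠ 0 := by
  induction x using List.reverseRecOn with
  | nil => simp [a_nil]
  | append_singleton y b ih =>
      have hSy : S m y ≠ 0 := fun h =>
        hS (le_antisymm (h ▸ S_child_le m y b) zero_le)
      have hay := ih hSy
      have hd : S m (y ++ [false]) + S m (y ++ [true]) ≠ 0 := by
        intro h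
        apply hS
        cases b
        · exact le_antisymm (h ▸ le_self_add) zero_le
        · exact le_antisymm (h ▸ le_add_self) zero_le
      have hdt : S m (y ++ [false]) + S m (y ++ [true]) ≠ ∞ :=
        ENNReal.add_ne_top.mpr ⟨S_ne_top m hm _, S_ne_top m hm _⟩
      rw [a_append, child, if_neg hd]
      simp only [ne_eq, ENNReal.div_eq_zero_iff, mul_eq_zero, not_or]
      exact ⟨⟨hay, hS⟩, hdt⟩

lemma step_le (hm : DiscreteSemimeasure m) (x : List Bool) (b : Bool) :
    m x / a m x + S m (x ++ [b]) / a m (x ++ [b]) ≤ S m x / a m x := by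
  by_cases hSb : S m (x ++ [b]) = 0
  · rw [hSb, ENNReal.zero_div, add_zero]
    exact ENNReal.div_le_div_right (m_le_S m x) _
  · set d := S m (x ++ [false]) + S m (x ++ [true]) with hddef
    have hd : d ≠ 0 := by
      intro h
      apply hSb
      cases b
      · exact le_antisymm (h ▸ le_self_add) zero_le
      · exact le_antisymm (h ▸ le_add_self) zero_le
    have hdt : d ≠ ∞ := ENNReal.add_ne_top.mpr ⟨S_ne_top m hm _, S_ne_top m hm _⟩
    have hSx : S m x ≠ 0 := fun h =>
      hSb (le_antisymm (h ▸ S_child_le m x b) zero_le)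
    have ha : a m x ≠ 0 := a_ne_zero m hm x hSx
    have hat : a m x ≠ ∞ := a_ne_top m hm x
    have hSbt : S m (x ++ [b]) ≠ ∞ := S_ne_top m hm _
    have hA : a m (x ++ [b]) = a m x * (S m (x ++ [b]) / d) := by
      rw [a_append, child, if_neg hd, mul_div_assoc]
    have hq : S m (x ++ [b]) / a m (x ++ [b]) = d / a m x := by
      rw [hA, div_eq_mul_inv,
        ENNReal.mul_inv (Or.inl ha) (Or.inl hat),
        ENNReal.inv_div (Or.inl hdt) (Or.inl hd), ← mul_assoc,
        mul_comm (S m (x ++ [b])) (a m x)⁻¹, mul_assoc, div_eq_mul_inv d,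
        ← mul_assoc (S m (x ++ [b])),
        mul_comm (S m (x ++ [b])) d, mul_assoc d, ENNReal.mul_inv_cancel hSb hSbt,
        mul_one, mul_comm, ← div_eq_mul_inv]
    rw [hq, ENNReal.div_add_div_same, ← S_rec]

lemma prefixSeq_succ (ω : ℕ → Bool) (n : ℕ) :
    prefixSeq ω (n + 1) = prefixSeq ω n ++ [ω n] := by
  simp [prefixSeq, List.range_succ]

lemma invariant (hm : DiscreteSemimeasure m) (ω : ℕ → Bool) (N : ℕ) :
    (∑ k ∈ Finset.range N, m (prefixSeq ω k) / a m (prefixSeq ω k)) +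
      S m (prefixSeq ω N) / a m (prefixSeq ω N) ≤ 1 := by
  induction N with
  | zero =>
      have : prefixSeq ω 0 = [] := rfl
      rw [this]
      simp only [Finset.range_zero, Finset.sum_empty, zero_add, a_nil, div_one]
      have : S m [] = ∑' z : List Bool, m z := by
        simp [S]
      rw [this]; exact hm
  | succ N ih =>
      rw [Finset.sum_range_succ, add_assoc, prefixSeq_succ]
      calc _ ≤ (∑ k ∈ Finset.range N, m (prefixSeq ω k) / a m (prefixSeq ω k)) +
            S m (prefixSeq ω N) / a m (prefixSeq ω N) := by
              gcongr
              exact step_le m hm _ _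
        _ ≤ 1 := ih

end Prop1

/-- Non-effective content of Proposition 1: a measure on the binary tree making
the sum of `m/a` along every path at most 1. -/
theorem prop1_noneffective (m : List Bool → ℝ≥0∞) (hm : DiscreteSemimeasure m) :
    ∃ a : List Bool → ℝ≥0∞,
      a [] = 1 ∧ (∀ x : List Bool, a (x ++ [false]) + a (x ++ [true]) = a x) ∧
      ∀ ω : ℕ → Bool, ∑' n : ℕ, m (prefixSeq ω n) / a (prefixSeq ω n) ≤ 1 := by
  refine ⟨Prop1.a m, Prop1.a_nil m, ?_, ?_⟩
  · intro x
    rw [Prop1.a_append, Prop1.a_append]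
    unfold Prop1.child
    by_cases hd : Prop1.S m (x ++ [false]) + Prop1.S m (x ++ [true]) = 0
    · simp [hd]
    · rw [if_neg hd, if_neg hd]
      have hdt : Prop1.S m (x ++ [false]) + Prop1.S m (x ++ [true]) ≠ ∞ :=
        ENNReal.add_ne_top.mpr ⟨Prop1.S_ne_top m hm _, Prop1.S_ne_top m hm _⟩
      rw [ENNReal.div_add_div_same, ← mul_add, mul_div_assoc,
        ENNReal.div_self hd hdt, mul_one]
  · intro ω
    apply ENNReal.tsum_le_of_sum_range_le
    intro n
    exact le_trans le_self_add (Prop1.invariant m hm ω n)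
end

section
/- Proportional-splitting bound (core of the proof of Proposition 1). Let m be a discrete semimeasure and for each string z set M z := ∑' u : List Bool, m (z ++ u). Define a : List Bool → ℝ≥0∞ recursively by a [] = 1 and, for every string z and every bit b, a (z ++ [b]) = a z * (M (z ++ [b]) / (M (z ++ [false]) + M (z ++ [true]))) (quotients in ℝ≥0∞, so in particular 0/0 = 0). Then for every infinite binary sequence ω : ℕ → Bool, ∑' n : ℕ, m(ω↾n) / a(ω↾n) ≤ M []. -/
open scoped ENNReal NNReal

private def consEquiv : Bool × List Bool ≃ ↥(({([] : List Bool)}ᶜ : Set (List Bool))) where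
  toFun p := ⟨p.1 :: p.2, by simp⟩
  invFun u := match u with
    | ⟨[], h⟩ => (h rfl).elim
    | ⟨b :: v, _⟩ => (b, v)
  left_inv p := rfl
  right_inv u := by
    rcases u with ⟨l, hl⟩
    rcases l with _ | ⟨b, v⟩
    · exact (hl rfl).elim
    · rfl

private lemma tsum_list_split (f : List Bool → ℝ≥0∞) :
    ∑' u : List Bool, f u
      = f [] + ((∑' u : List Bool, f (false :: u)) + ∑' u : List Bool, f (true :: u)) := by
  have h1 := Summable.tsum_add_tsum_compl (s := {([] : List Bool)}) (f := f)
    ENNReal.summable ENNReal.summable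
  have h2 : ∑' x : ↥(({([] : List Bool)}ᶜ : Set (List Bool))), f x
      = (∑' u : List Bool, f (false :: u)) + ∑' u : List Bool, f (true :: u) := by
    rw [← consEquiv.tsum_eq (fun x => f x.1)]
    show ∑' p : Bool × List Bool, f (p.1 :: p.2) = _
    rw [ENNReal.tsum_prod (f := fun b u => f (b :: u)), tsum_bool]
  rw [tsum_singleton, h2] at h1
  exact h1.symm

private lemma div_aux (b c A : ℝ≥0∞) (hb0 : b ≠ 0) (hb : b ≠ ∞) (hc0 : c ≠ 0) (hc : c ≠ ∞) :
    b / (A * (b / c)) = c / A := by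
  have h1 : (b / c) ≠ 0 := by simp [ENNReal.div_eq_zero_iff, hb0, hc]
  have h2 : (b / c) ≠ ∞ := by simp [ENNReal.div_eq_top, hb, hc0]
  rw [div_eq_mul_inv b, ENNReal.mul_inv (Or.inr h2) (Or.inr h1),
    ENNReal.inv_div (Or.inr hb) (Or.inr hb0), mul_comm A⁻¹, ← mul_assoc,
    div_eq_mul_inv c b, ← mul_assoc, mul_comm b c, mul_assoc c,
    ENNReal.mul_inv_cancel hb0 hb, mul_one, ← div_eq_mul_inv]

/-- Proportional-splitting bound: the core of the proof of Proposition 1. -/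
theorem proportional_splitting (m : List Bool → ℝ≥0∞) (hm : DiscreteSemimeasure m)
    (M : List Bool → ℝ≥0∞) (hM : ∀ z : List Bool, M z = ∑' u : List Bool, m (z ++ u))
    (a : List Bool → ℝ≥0∞) (ha0 : a [] = 1)
    (ha : ∀ (z : List Bool) (b : Bool),
      a (z ++ [b]) = a z * (M (z ++ [b]) / (M (z ++ [false]) + M (z ++ [true])))) :
    ∀ ω : ℕ → Bool, ∑' n : ℕ, m (prefixSeq ω n) / a (prefixSeq ω n) ≤ M [] := by
  intro ω
  have hMle : ∀ z, M z ≤ M [] := by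
    intro z
    rw [hM z, hM []]
    simpa using ENNReal.tsum_comp_le_tsum_of_injective
      (f := fun u : List Bool => z ++ u) (fun u v h => by simpa using h) m
  have hMtop : ∀ z, M z ≠ ∞ := by
    intro z
    have h1 : M [] ≠ ∞ := by
      rw [hM []]
      exact ne_top_of_le_ne_top ENNReal.one_ne_top (by simpa [DiscreteSemimeasure] using hm)
    exact ne_top_of_le_ne_top h1 (hMle z)
  have hsplit : ∀ z, M z = m z + (M (z ++ [false]) + M (z ++ [true])) := by
    intro z
    rw [hM z, tsum_list_split (fun u => m (z ++ u))]
    simp [hM]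
  have hmle : ∀ z, m z ≤ M z := fun z => (hsplit z) ▸ le_add_right le_rfl
  have hpre : ∀ n, prefixSeq ω (n + 1) = prefixSeq ω n ++ [ω n] := by
    intro n; simp [prefixSeq, List.range_succ]
  have key : ∀ n, (∑ k ∈ Finset.range n, m (prefixSeq ω k) / a (prefixSeq ω k))
      + M (prefixSeq ω n) / a (prefixSeq ω n) ≤ M [] := by
    intro n
    induction n with
    | zero => simp [prefixSeq, ha0]
    | succ n ih =>
        set z := prefixSeq ω n with hz
        have hstep : m z / a z + M (prefixSeq ω (n+1)) / a (prefixSeq ω (n+1))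
            ≤ M z / a z := by
          rw [hpre n, ha z (ω n)]
          set b := ω n with hb
          by_cases hzb : M (z ++ [b]) = 0
          · simp only [← hz, hzb, ENNReal.zero_div, mul_zero, add_zero]
            exact ENNReal.div_le_div_right (hmle z) _
          · have hbleD : M (z ++ [b]) ≤ M (z ++ [false]) + M (z ++ [true]) := by
              cases hbv : b
              · exact le_add_right le_rfl
              · exact le_add_left le_rfl
            have hD0 : M (z ++ [false]) + M (z ++ [true]) ≠ 0 :=
              fun h => hzb (le_antisymm (h ▸ hbleD) zero_le)
            have hDtop : M (z ++ [false]) + M (z ++ [true]) ≠ ∞ :=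
              ENNReal.add_ne_top.mpr ⟨hMtop _, hMtop _⟩
            rw [div_aux _ _ _ hzb (ne_top_of_le_ne_top hDtop hbleD) hD0 hDtop,
              ENNReal.div_add_div_same, ← hsplit z]
        calc (∑ k ∈ Finset.range (n+1), m (prefixSeq ω k) / a (prefixSeq ω k))
              + M (prefixSeq ω (n+1)) / a (prefixSeq ω (n+1))
            = (∑ k ∈ Finset.range n, m (prefixSeq ω k) / a (prefixSeq ω k))
              + (m z / a z + M (prefixSeq ω (n+1)) / a (prefixSeq ω (n+1))) := by
              rw [Finset.sum_range_succ, add_assoc]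
          _ ≤ (∑ k ∈ Finset.range n, m (prefixSeq ω k) / a (prefixSeq ω k))
              + M z / a z := by gcongr
          _ ≤ M [] := ih
  refine ENNReal.tsum_le_of_sum_range_le (fun n => ?_)
  exact le_trans (le_add_right le_rfl) (key n)
end

section
/- Riemann-sum inequality used in the finite-game analysis. For every real k ≥ 1 there exist a real ε with 0 < ε < 1 and n₀ : ℕ such that for every natural number n ≥ n₀, ∑_{i=1}^{n} (k·d_i·(1-ε)) / (n·((k+ε)·d_i - ε)) > 1, where for 1 ≤ i ≤ n one sets d_i := 1 - (k·(1-ε)·(1 - i/n))/(k+ε). -/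
open Finset

set_option maxHeartbeats 1600000 in
/-- Riemann-sum inequality used in the finite-game analysis. -/
theorem riemann_sum_gt_one (k : ℝ) (hk : 1 ≤ k) :
    ∃ ε : ℝ, 0 < ε ∧ ε < 1 ∧ ∃ n₀ : ℕ, ∀ n : ℕ, n₀ ≤ n →
      1 < ∑ i ∈ Finset.Icc 1 n,
        (k * (1 - k * (1 - ε) * (1 - (i : ℝ) / n) / (k + ε)) * (1 - ε)) /
          ((n : ℝ) * ((k + ε) * (1 - k * (1 - ε) * (1 - (i : ℝ) / n) / (k + ε)) - ε)) := by
  obtain ⟨ε, hεdef⟩ : ∃ ε : ℝ, ε = Real.exp (-(2*k+3)) / 2 := ⟨_, rfl⟩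
  have hε0 : 0 < ε := by rw [hεdef]; positivity
  have hexp : Real.exp (-(2*k+3)) ≤ 1 / (2*k+3) := by
    rw [Real.exp_neg]
    have h1 : 2*k+3 ≤ Real.exp (2*k+3) := by
      nlinarith [Real.add_one_le_exp (2*k+3)]
    rw [inv_eq_one_div, div_le_div_iff₀ (Real.exp_pos _) (by linarith)]
    nlinarith [Real.exp_pos (2*k+3)]
  have hεs : ε * (2*k+3) ≤ 1/2 := by
    rw [hεdef]
    rw [div_mul_eq_mul_div, div_le_div_iff₀ (by norm_num) (by norm_num)]
    calc Real.exp (-(2*k+3)) * (2*k+3) * 2 ≤ (1/(2*k+3)) * (2*k+3) * 2 := by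
          apply mul_le_mul_of_nonneg_right _ (by norm_num)
          exact mul_le_mul_of_nonneg_right hexp (by linarith)
      _ = 2 := by field_simp
      _ = 1 * 2 := by norm_num
  have hε1 : ε < 1 := by nlinarith
  have hεhalf : ε ≤ 1/2 := by nlinarith
  have hkε : 0 < k + ε := by linarith
  have hk0 : (0:ℝ) < k := by linarith
  refine ⟨ε, hε0, hε1, ⌈1/ε⌉₊ + 1, fun n hn => ?_⟩
  have hn1 : 1 ≤ n := le_trans (Nat.le_add_left 1 _) hn
  have hnR0 : (0:ℝ) < n := by exact_mod_cast hn1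
  have hnε : (1:ℝ) ≤ n * ε := by
    have h1 : (1/ε : ℝ) ≤ ⌈1/ε⌉₊ := Nat.le_ceil _
    have h2 : ((⌈1/ε⌉₊ : ℝ)) ≤ n := by
      exact_mod_cast le_trans (Nat.le_succ _) hn
    have : (1/ε : ℝ) ≤ n := le_trans h1 h2
    rw [div_le_iff₀ hε0] at this
    linarith
  -- Rewrite each term of the sum
  have hterm : ∀ i ∈ Icc 1 n,
      (k * (1 - k * (1 - ε) * (1 - (i : ℝ) / n) / (k + ε)) * (1 - ε)) /
        ((n : ℝ) * ((k + ε) * (1 - k * (1 - ε) * (1 - (i : ℝ) / n) / (k + ε)) - ε))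
      = (1-ε)*k/((k+ε)*n) + (1-ε)*ε/(k+ε) * (1/((n:ℝ)*ε + (1-ε)*i)) := by
    intro i hi
    obtain ⟨hi1, hin⟩ := mem_Icc.mp hi
    have hiR : (1:ℝ) ≤ (i:ℝ) := by exact_mod_cast hi1
    have hs : 0 < (n:ℝ)*ε + (1-ε)*i := by nlinarith
    have hden : (n : ℝ) * ((k + ε) * (1 - k * (1 - ε) * (1 - (i : ℝ) / n) / (k + ε)) - ε)
        = k * ((n:ℝ)*ε + (1-ε)*i) := by
      field_simp
      ring
    rw [hden]
    have hs' : (n:ℝ)*ε + (1-ε)*i ≠ 0 := hs.ne'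
    rw [mul_one_div, div_div, div_add_div _ _ (by positivity) (mul_ne_zero hkε.ne' hs'),
      div_eq_div_iff (mul_ne_zero hk0.ne' hs') (mul_ne_zero (by positivity) (mul_ne_zero hkε.ne' hs'))]
    field_simp
    ring
  rw [Finset.sum_congr rfl hterm, Finset.sum_add_distrib, Finset.sum_const,
    Nat.card_Icc, ← Finset.mul_sum]
  simp only [Nat.add_sub_cancel, nsmul_eq_mul]
  have hfirst : (n:ℝ) * ((1-ε)*k/((k+ε)*n)) = (1-ε)*k/(k+ε) := by
    field_simp
  rw [hfirst]
  -- Lower bound for the harmonic-type sum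
  have hT1 : ∑ i ∈ Icc 1 n, 1/((n:ℝ)*ε + i) ≤ ∑ i ∈ Icc 1 n, 1/((n:ℝ)*ε + (1-ε)*i) := by
    apply Finset.sum_le_sum
    intro i hi
    obtain ⟨hi1, hin⟩ := mem_Icc.mp hi
    have hiR : (1:ℝ) ≤ (i:ℝ) := by exact_mod_cast hi1
    apply one_div_le_one_div_of_le
    · nlinarith
    · nlinarith
  have hlog : ∀ i ∈ Icc 1 n,
      Real.log ((n:ℝ)*ε + (i+1)) - Real.log ((n:ℝ)*ε + i) ≤ 1/((n:ℝ)*ε + i) := by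
    intro i hi
    obtain ⟨hi1, hin⟩ := mem_Icc.mp hi
    have hiR : (1:ℝ) ≤ (i:ℝ) := by exact_mod_cast hi1
    have ha : 0 < (n:ℝ)*ε + i := by nlinarith
    have ha1 : 0 < (n:ℝ)*ε + (i+1) := by nlinarith
    rw [← Real.log_div (by positivity) (by positivity)]
    have hq : 0 < ((n:ℝ)*ε + (i+1)) / ((n:ℝ)*ε + i) := by positivity
    have := Real.log_le_sub_one_of_pos hq
    have heq : ((n:ℝ)*ε + (i+1)) / ((n:ℝ)*ε + i) - 1 = 1/((n:ℝ)*ε + i) := by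
      field_simp
      ring
    linarith [heq ▸ this]
  have htel : ∑ i ∈ Icc 1 n, (Real.log ((n:ℝ)*ε + (i+1)) - Real.log ((n:ℝ)*ε + i))
      = Real.log ((n:ℝ)*ε + (n+1)) - Real.log ((n:ℝ)*ε + 1) := by
    have key : ∀ m : ℕ, ∑ i ∈ Icc 1 m, (Real.log ((n:ℝ)*ε + (i+1)) - Real.log ((n:ℝ)*ε + i))
        = Real.log ((n:ℝ)*ε + (m+1)) - Real.log ((n:ℝ)*ε + 1) := by
      intro m
      induction m with
      | zero => simp
      | succ m ih =>
        rw [Finset.sum_Icc_succ_top (by omega), ih]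
        push_cast
        ring
    exact key n
  have hT2 : 2*k+3 ≤ ∑ i ∈ Icc 1 n, 1/((n:ℝ)*ε + i) := by
    have hstep : Real.log ((n:ℝ)*ε + (n+1)) - Real.log ((n:ℝ)*ε + 1)
        ≤ ∑ i ∈ Icc 1 n, 1/((n:ℝ)*ε + i) := htel ▸ Finset.sum_le_sum hlog
    have h1 : Real.log (n:ℝ) ≤ Real.log ((n:ℝ)*ε + (n+1)) := by
      apply Real.log_le_log hnR0
      nlinarith
    have h2 : Real.log ((n:ℝ)*ε + 1) ≤ Real.log ((n:ℝ) * (2*ε)) := by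
      have hle : (n:ℝ)*ε + 1 ≤ (n:ℝ)*(2*ε) := by
        have hr : (n:ℝ)*(2*ε) = (n:ℝ)*ε + (n:ℝ)*ε := by ring
        linarith
      exact Real.log_le_log (by positivity) hle
    have h3 : Real.log ((n:ℝ) * (2*ε)) = Real.log (n:ℝ) + Real.log (2*ε) := by
      rw [Real.log_mul (by positivity) (by positivity)]
    have h4 : Real.log (2*ε) = -(2*k+3) := by
      rw [hεdef]
      rw [show (2:ℝ) * (Real.exp (-(2*k+3)) / 2) = Real.exp (-(2*k+3)) by ring]
      exact Real.log_exp _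
    linarith
  have hT : 2*k+3 ≤ ∑ i ∈ Icc 1 n, 1/((n:ℝ)*ε + (1-ε)*i) := le_trans hT2 hT1
  -- Final inequality
  have hc : 0 < (1-ε)*ε/(k+ε) := by
    have h0 : 0 < (1-ε)*ε := by nlinarith
    exact div_pos h0 hkε
  have hfinal : 1 < (1-ε)*k/(k+ε) + (1-ε)*ε/(k+ε) * (2*k+3) := by
    have heq : (1-ε)*k/(k+ε) + (1-ε)*ε/(k+ε) * (2*k+3)
        = ((1-ε)*k + (1-ε)*ε*(2*k+3))/(k+ε) := by
      field_simp
    rw [heq, lt_div_iff₀ hkε]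
    nlinarith
  calc (1:ℝ) < (1-ε)*k/(k+ε) + (1-ε)*ε/(k+ε) * (2*k+3) := hfinal
    _ ≤ (1-ε)*k/(k+ε) + (1-ε)*ε/(k+ε) * ∑ i ∈ Icc 1 n, 1/((n:ℝ)*ε + (1-ε)*i) := by
        have := mul_le_mul_of_nonneg_left hT (le_of_lt hc)
        linarith
end
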